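/- arXiv:2510.10968 — 2 statements merged into one kernel-verified Lean document; each statement's English description precedes it below -/
import Mathlib

section
/- For vectors u, v in ℝ^n and a positive semidefinite matrix C with v in the range of C, the inner product ⟨u, v⟩ is bounded by (1/4)⟨u, C u⟩ + ⟨v, C⁺ v⟩, where C⁺ is the Moore–Penrose pseudoinverse of C. -/
open Matrix

private lemma dot3 {n : ℕ} (A B : Matrix (Fin n) (Fin n) ℝ) (a b : Fin n → ℝ) :
    (A.mulVec a) ⬝ᵥ (B.mulVec b) = a ⬝ᵥ (Aᵀ * B).mulVec b := by
  rw [Matrix.dotProduct_mulVec, Matrix.dotProduct_mulVec, ← Matrix.vecMul_vecMul,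
    Matrix.vecMul_transpose]

/-- Weighted Young's inequality: for a positive semidefinite matrix `C`,
a matrix `Cp` satisfying the Moore–Penrose (pseudoinverse) conditions,
and a vector `v` in the range of `C`, the inner product `⟨u, v⟩` is bounded by
`(1/4) ⟨u, C u⟩ + ⟨v, C⁺ v⟩`. -/
theorem weighted_young_inequality {n : ℕ}
    (C Cp : Matrix (Fin n) (Fin n) ℝ)
    (hC : C.PosSemidef)
    (h1 : C * Cp * C = C) (h2 : Cp * C * Cp = Cp)
    (h3 : (C * Cp)ᵀ = C * Cp) (h4 : (Cp * C)ᵀ = Cp * C)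
    (u v : Fin n → ℝ) (hv : ∃ w, v = C.mulVec w) :
    u ⬝ᵥ v ≤ (1 / 4) * (u ⬝ᵥ C.mulVec u) + v ⬝ᵥ Cp.mulVec v := by
  obtain ⟨w, rfl⟩ := hv
  have hCsymm : Cᵀ = C := by simpa using hC.1.eq
  open scoped MatrixOrder in
  set S := CFC.sqrt C with hS
  have hSsymm : Sᵀ = S := by
    open scoped MatrixOrder in
    simpa using (CFC.sqrt_nonneg C).posSemidef.1.eq
  have hSS : S * S = C := by
    open scoped MatrixOrder in
    exact CFC.sqrt_mul_sqrt_self C hC.nonneg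
  set x := S.mulVec u with hx
  set y := S.mulVec w with hy
  have hxy : x ⬝ᵥ y = u ⬝ᵥ C.mulVec w := by
    rw [hx, hy, dot3, hSsymm, hSS]
  have hxx : x ⬝ᵥ x = u ⬝ᵥ C.mulVec u := by
    rw [hx, dot3, hSsymm, hSS]
  have hyy : y ⬝ᵥ y = (C.mulVec w) ⬝ᵥ Cp.mulVec (C.mulVec w) := by
    rw [hy, dot3, hSsymm, hSS, Matrix.mulVec_mulVec, dot3, hCsymm,
      ← Matrix.mul_assoc, h1]
  have key : (0:ℝ) ≤ ((1/2:ℝ) • x - y) ⬝ᵥ ((1/2:ℝ) • x - y) :=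
    Finset.sum_nonneg fun i _ => mul_self_nonneg _
  have expand : ((1/2:ℝ) • x - y) ⬝ᵥ ((1/2:ℝ) • x - y)
      = (1/4) * (x ⬝ᵥ x) - (x ⬝ᵥ y) + y ⬝ᵥ y := by
    simp only [sub_dotProduct, dotProduct_sub, smul_dotProduct,
      dotProduct_smul, smul_eq_mul, dotProduct_comm y x]
    ring
  rw [expand] at key
  rw [← hxy, ← hxx, ← hyy]
  linarith
end

section
/- Let z^(1), …, z^(J) ∈ ℝ^n, let z̄ = (1/J)Σ_i z^(i), and let C(z^(1),…,z^(J)) = (1/J)Σ_i (z^(i) − z̄)(z^(i) − z̄)ᵀ. Then for each fixed j, the divergence of C with respect to z^(j) (i.e., the vector with components Σ_k ∂C_{ik}/∂z^(j)_k) equals ((n+1)/J)(z^(j) − z̄). -/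
lemma update_sum_eval {n J : ℕ} (Z : Fin J → Fin n → ℝ) (j : Fin J) (w : Fin n → ℝ) (m : Fin n) :
    ∑ l' : Fin J, Function.update Z j w l' m = (∑ l' : Fin J, Z l' m) + (w m - Z j m) := by
  have h : (fun l' => Function.update Z j w l' m)
      = Function.update (fun l' => Z l' m) j (w m) := by
    funext l'
    by_cases hl : l' = j <;> simp [Function.update, hl]
  calc ∑ l' : Fin J, Function.update Z j w l' m
      = ∑ l' : Fin J, Function.update (fun l' => Z l' m) j (w m) l' := by rw [← h]
    _ = _ := by
        rw [Finset.sum_update_of_mem (Finset.mem_univ j),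
          Finset.sdiff_singleton_eq_erase, Finset.sum_erase_eq_sub (Finset.mem_univ j)]
        ring

lemma hasFDeriv_g {n J : ℕ} (Z : Fin J → Fin n → ℝ) (j l : Fin J) (m : Fin n) (w₀ : Fin n → ℝ) :
    HasFDerivAt (fun w : Fin n → ℝ =>
        Function.update Z j w l m - (1 / (J:ℝ)) * ∑ l' : Fin J, Function.update Z j w l' m)
      ((((if l = j then (1:ℝ) else 0) - 1 / (J:ℝ))) •
        (ContinuousLinearMap.proj m : ((Fin n → ℝ) →L[ℝ] ℝ))) w₀ := by
  set P : (Fin n → ℝ) →L[ℝ] ℝ := ContinuousLinearMap.proj m with hP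
  have hfun : (fun w : Fin n → ℝ =>
      Function.update Z j w l m - (1 / (J:ℝ)) * ∑ l' : Fin J, Function.update Z j w l' m)
      = fun w => (if l = j then w m else Z l m)
          - (1/(J:ℝ)) * ((∑ l' : Fin J, Z l' m) + (w m - Z j m)) := by
    funext w
    rw [update_sum_eval]
    by_cases hl : l = j <;> simp [Function.update, hl]
  rw [hfun]
  have hPd : HasFDerivAt (fun w : Fin n → ℝ => w m) P w₀ := P.hasFDerivAt
  have h1 : HasFDerivAt (fun w : Fin n → ℝ => (if l = j then w m else Z l m))
      ((if l = j then (1:ℝ) else 0) • P) w₀ := by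
    by_cases hl : l = j
    · simpa [hl] using hPd
    · simpa [hl] using hasFDerivAt_const (Z l m) w₀
  have h2 : HasFDerivAt
      (fun w : Fin n → ℝ => (1/(J:ℝ)) * ((∑ l' : Fin J, Z l' m) + (w m - Z j m)))
      ((1/(J:ℝ)) • P) w₀ := by
    have := ((hasFDerivAt_const (∑ l' : Fin J, Z l' m) w₀).add
      (hPd.sub (hasFDerivAt_const (Z j m) w₀))).const_mul (1/(J:ℝ))
    simpa using this
  have := h1.sub h2
  refine this.congr_fderiv ?_
  ext x
  by_cases hl : l = j <;> simp [hl, sub_mul]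

/-- Divergence of the empirical covariance with respect to the `j`-th particle:
with `z̄` the empirical mean and
`C(Z) i k = (1/J) ∑ l, (Z l i − z̄ i)(Z l k − z̄ k)`, the vector with components
`∑ k, ∂ C i k / ∂ (z^(j) k)` equals `((n+1)/J) (z^(j) − z̄)`. -/
theorem divergence_empirical_covariance {n J : ℕ} (hJ : 0 < J)
    (Z : Fin J → Fin n → ℝ) (j : Fin J) (i : Fin n) :
    (∑ k : Fin n,
      fderiv ℝ
        (fun w : Fin n → ℝ =>
          (1 / (J : ℝ)) * ∑ l : Fin J,
            (Function.update Z j w l i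
              - (1 / (J : ℝ)) * ∑ l' : Fin J, Function.update Z j w l' i)
            * (Function.update Z j w l k
              - (1 / (J : ℝ)) * ∑ l' : Fin J, Function.update Z j w l' k))
        (Z j) (Pi.single k 1))
    = ((n + 1 : ℝ) / (J : ℝ)) * (Z j i - (1 / (J : ℝ)) * ∑ l : Fin J, Z l i) := by
  classical
  have hJ' : (J:ℝ) ≠ 0 := Nat.cast_ne_zero.mpr hJ.ne'
  set u : Fin J → Fin n → ℝ := fun l m => Z l m - (1/(J:ℝ)) * ∑ l' : Fin J, Z l' m with hu
  set a : Fin J → ℝ := fun l => (if l = j then (1:ℝ) else 0) - 1/(J:ℝ) with ha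
  have key : ∀ k : Fin n,
      fderiv ℝ (fun w : Fin n → ℝ => (1/(J:ℝ)) * ∑ l : Fin J,
        (Function.update Z j w l i - (1/(J:ℝ)) * ∑ l' : Fin J, Function.update Z j w l' i) *
        (Function.update Z j w l k - (1/(J:ℝ)) * ∑ l' : Fin J, Function.update Z j w l' k)) (Z j)
      = (1/(J:ℝ)) • ∑ l : Fin J,
          (u l i • (a l • (ContinuousLinearMap.proj k : ((Fin n → ℝ) →L[ℝ] ℝ)))
           + u l k • (a l • (ContinuousLinearMap.proj i : ((Fin n → ℝ) →L[ℝ] ℝ)))) := by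
    intro k
    apply HasFDerivAt.fderiv
    apply HasFDerivAt.const_mul
    apply HasFDerivAt.fun_sum
    intro l _
    have := (hasFDeriv_g Z j l i (Z j)).fun_mul (hasFDeriv_g Z j l k (Z j))
    simpa [hu, ha, Function.update_eq_self] using this
  simp only [key]
  have happ : ∀ k : Fin n,
      ((1/(J:ℝ)) • ∑ l : Fin J,
          (u l i • (a l • (ContinuousLinearMap.proj k : ((Fin n → ℝ) →L[ℝ] ℝ)))
           + u l k • (a l • (ContinuousLinearMap.proj i : ((Fin n → ℝ) →L[ℝ] ℝ)))))
        (Pi.single k 1)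
      = (1/(J:ℝ)) * ∑ l : Fin J,
          (u l i * a l + u l k * (a l * (if i = k then 1 else 0))) := by
    intro k
    simp [ContinuousLinearMap.sum_apply, Finset.mul_sum, Pi.single_apply, mul_comm]
  simp only [happ]
  have hsum0 : ∀ m, ∑ l : Fin J, u l m = 0 := by
    intro m
    simp only [hu]
    rw [Finset.sum_sub_distrib, Finset.sum_const, Finset.card_univ, Fintype.card_fin,
      nsmul_eq_mul]
    field_simp
    ring
  have hS : ∀ m, ∑ l : Fin J, u l m * a l = u j m := by
    intro m
    simp only [ha, mul_sub, mul_ite, mul_one, mul_zero]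
    rw [Finset.sum_sub_distrib, Finset.sum_ite_eq' Finset.univ j (fun l => u l m),
      ← Finset.sum_mul, hsum0]
    simp
  have hinner : ∀ k : Fin n, ∑ l : Fin J,
      (u l i * a l + u l k * (a l * (if i = k then 1 else 0)))
      = u j i + (if i = k then u j i else 0) := by
    intro k
    rw [Finset.sum_add_distrib, hS i]
    congr 1
    by_cases h : i = k
    · subst h; simpa using hS i
    · simp [h]
  simp only [hinner]
  rw [← Finset.mul_sum, Finset.sum_add_distrib, Finset.sum_const, Finset.card_univ, Fintype.card_fin,
    Finset.sum_ite_eq Finset.univ i (fun _ => u j i)]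
  simp only [Finset.mem_univ, if_true, nsmul_eq_mul]
  have : u j i = Z j i - 1 / (J:ℝ) * ∑ l : Fin J, Z l i := rfl
  rw [this]
  ring
end
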